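/- The 6-dimensional algebra B_{6,3} with nonzero products [e₁,e₂]=e₃, [e₃,e₄]=e₅, [e₁,e₃]=e₆, [e₄,e₅]=e₆ is not a Malcev algebra: there exist x,y,z with J(x,y,[x,z]) ≠ [J(x,y,z),x]. -/

import Mathlib

set_option maxHeartbeats 1600000

/-- The bracket of the 6-dimensional algebra `B_{6,3}`: nonzero products
`[e₁,e₂]=e₃`, `[e₃,e₄]=e₅`, `[e₁,e₃]=e₆`, `[e₄,e₅]=e₆` (0-indexed coordinates). -/
def b63 {F : Type*} [Field F] (x y : Fin 6 → F) : Fin 6 → F :=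
  ![0, 0, x 0 * y 1 - x 1 * y 0, 0, x 2 * y 3 - x 3 * y 2,
    (x 0 * y 2 - x 2 * y 0) + (x 3 * y 4 - x 4 * y 3)]

/-- The Jacobian of `B_{6,3}`. -/
def jac63 {F : Type*} [Field F] (x y z : Fin 6 → F) : Fin 6 → F :=
  b63 (b63 x y) z + b63 (b63 y z) x + b63 (b63 z x) y

/-- `B_{6,3}` is not a Malcev algebra: there exist `x,y,z` with
`J(x,y,[x,z]) ≠ [J(x,y,z),x]`. -/
theorem stmt_11 {F : Type*} [Field F] (h2 : (2 : F) ≠ 0) :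
    ∃ x y z : Fin 6 → F, jac63 x y (b63 x z) ≠ b63 (jac63 x y z) x := by
  refine ⟨![0,0,0,1,0,0], ![1,0,0,0,0,0], ![0,1,0,0,0,0], fun h => ?_⟩
  have := congrFun h 5
  simp [jac63, b63, Pi.add_apply] at this
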